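/- Under the pseudo regression setup, suppose |u(z)| ≤ D and Var[Y^{(1)} | 𝒰^{(1)} = z] ≤ σ² for all z ∈ 𝒟, and let λ_min > 0 and λ_max denote the smallest and largest eigenvalue of the Gram matrix 𝒢. Let u^K be the L²(μ)-orthogonal projection of u onto span{ψ_1,…,ψ_K}. Then E ∫_𝒟 |ū(z) − u^K(z)|² μ(dz) ≤ (σ² + D²)·tr(𝒢)/(M·λ_min) ≤ (σ² + D²)·K·λ_max/(M·λ_min). -/

import Mathlib

open MeasureTheory ProbabilityTheory Filter Matrix

namespace PseudoReg

variable {K : ℕ}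

lemma quadform_eq (G : Matrix (Fin K) (Fin K) ℝ) (x : Fin K → ℝ) :
    ∑ k, ∑ l, x k * G k l * x l = x ⬝ᵥ G *ᵥ x := by
  simp [dotProduct, mulVec, Finset.mul_sum, mul_assoc]

lemma sum_sq_eq (x : Fin K → ℝ) : ∑ k, x k ^ 2 = x ⬝ᵥ x := by
  simp [dotProduct, sq]

lemma posdef_of_rayleigh {G : Matrix (Fin K) (Fin K) ℝ} {lam : ℝ} (hlam : 0 < lam)
    (hsymm : ∀ k l, G k l = G l k)
    (h : ∀ x : Fin K → ℝ, lam * ∑ k, x k ^ 2 ≤ ∑ k, ∑ l, x k * G k l * x l) :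
    G.PosDef := by
  refine posDef_iff_dotProduct_mulVec.mpr ⟨?_, ?_⟩
  · ext i j
    simp [conjTranspose_apply, hsymm i j]
  · intro x hx
    have hx2 : 0 < ∑ k, x k ^ 2 := by
      rcases Function.ne_iff.1 hx with ⟨k, hk⟩
      have : 0 < x k ^ 2 := lt_of_le_of_ne (sq_nonneg _) (Ne.symm (pow_ne_zero 2 hk))
      exact lt_of_lt_of_le this (Finset.single_le_sum (fun i _ => sq_nonneg (x i))
        (Finset.mem_univ k))
    have hh := h x
    rw [quadform_eq] at hh
    have hst : star x = x := by simp
    rw [hst]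
    exact lt_of_lt_of_le (mul_pos hlam hx2) hh

lemma inv_entry_symm {G : Matrix (Fin K) (Fin K) ℝ} (hG : G.PosDef) (k l : Fin K) :
    G⁻¹ k l = G⁻¹ l k := by
  have h := hG.isHermitian.inv
  conv_lhs => rw [← h]
  simp [conjTranspose_apply]

lemma mulVec_inv_cancel {G : Matrix (Fin K) (Fin K) ℝ} (hG : G.PosDef) (x : Fin K → ℝ) :
    G *ᵥ (G⁻¹ *ᵥ x) = x := by
  rw [mulVec_mulVec, mul_nonsing_inv _ (isUnit_iff_isUnit_det _ |>.1 hG.isUnit), one_mulVec]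

lemma inv_quad_nonneg {G : Matrix (Fin K) (Fin K) ℝ} (hG : G.PosDef) (x : Fin K → ℝ) :
    0 ≤ ∑ k, ∑ l, x k * G⁻¹ k l * x l := by
  rw [quadform_eq]
  have := hG.inv.posSemidef.dotProduct_mulVec_nonneg x
  simpa using this

lemma inv_quadform_le {G : Matrix (Fin K) (Fin K) ℝ} {lam : ℝ} (hlam : 0 < lam)
    (hG : G.PosDef)
    (h : ∀ x : Fin K → ℝ, lam * ∑ k, x k ^ 2 ≤ ∑ k, ∑ l, x k * G k l * x l)
    (x : Fin K → ℝ) :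
    ∑ k, ∑ l, x k * G⁻¹ k l * x l ≤ lam⁻¹ * ∑ k, x k ^ 2 := by
  set y := G⁻¹ *ᵥ x with hy
  have hGy : G *ᵥ y = x := mulVec_inv_cancel hG x
  have h1 : lam * (y ⬝ᵥ y) ≤ y ⬝ᵥ x := by
    have := h y
    rw [quadform_eq, sum_sq_eq, hGy] at this
    exact this
  have hcs : (y ⬝ᵥ x) ^ 2 ≤ (y ⬝ᵥ y) * (x ⬝ᵥ x) := by
    have := Finset.sum_mul_sq_le_sq_mul_sq Finset.univ y x
    simpa [dotProduct, sq] using this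
  have hq : ∑ k, ∑ l, x k * G⁻¹ k l * x l = y ⬝ᵥ x := by
    rw [quadform_eq, ← hy]
    exact dotProduct_comm _ _
  rw [hq, sum_sq_eq]
  have hyy : 0 ≤ y ⬝ᵥ y := by
    rw [← sum_sq_eq]; exact Finset.sum_nonneg (fun i _ => sq_nonneg (y i))
  have hxx : 0 ≤ x ⬝ᵥ x := by
    rw [← sum_sq_eq]; exact Finset.sum_nonneg (fun i _ => sq_nonneg (x i))
  rcases le_or_gt (y ⬝ᵥ x) 0 with ht | ht
  · exact ht.trans (by positivity)
  · rw [le_inv_mul_iff₀ hlam]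
    nlinarith [h1, hcs]



lemma inv_conj_quad {G : Matrix (Fin K) (Fin K) ℝ} (hG : G.PosDef) (x : Fin K → ℝ) :
    ∑ k, ∑ k', (∑ j, G⁻¹ k j * x j) * G k k' * (∑ j, G⁻¹ k' j * x j)
      = ∑ j, ∑ j', x j * G⁻¹ j j' * x j' := by
  have e1 : ∑ k, ∑ k', (∑ j, G⁻¹ k j * x j) * G k k' * (∑ j, G⁻¹ k' j * x j)
      = (G⁻¹ *ᵥ x) ⬝ᵥ G *ᵥ (G⁻¹ *ᵥ x) := quadform_eq G (G⁻¹ *ᵥ x)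
  rw [e1, mulVec_inv_cancel hG, dotProduct_comm, ← quadform_eq]

lemma diag_bounds {G : Matrix (Fin K) (Fin K) ℝ} {lam Lam : ℝ}
    (heig : ∀ x : Fin K → ℝ,
      lam * ∑ k, x k ^ 2 ≤ ∑ k, ∑ l, x k * G k l * x l ∧
      ∑ k, ∑ l, x k * G k l * x l ≤ Lam * ∑ k, x k ^ 2) (k : Fin K) :
    lam ≤ G k k ∧ G k k ≤ Lam := by
  have h := heig (fun j => if j = k then (1:ℝ) else 0)
  simp only [ite_mul, mul_ite, one_mul, mul_one, zero_mul, mul_zero,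
    Finset.sum_ite_eq', Finset.mem_univ, if_true] at h
  have h1 : (∑ j : Fin K, (if j = k then (1:ℝ) else 0) ^ 2) = 1 := by
    simp [ite_pow, Finset.sum_ite_eq', one_pow]
  rw [h1] at h
  simpa using h

lemma trace_eq_sum_diag (G : Matrix (Fin K) (Fin K) ℝ) : G.trace = ∑ k, G k k := rfl

lemma integrable_mul_of_memℒp_two {α : Type*} [MeasurableSpace α] {μ : Measure α} {f g : α → ℝ}
    (hf : MemLp f 2 μ) (hg : MemLp g 2 μ) : Integrable (fun x => f x * g x) μ := by
  refine Integrable.mono' ((hf.integrable_sq.add hg.integrable_sq).const_mul (1/2))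
    (hf.aestronglyMeasurable.mul hg.aestronglyMeasurable)
    (Filter.Eventually.of_forall fun x => ?_)
  simp only [Pi.add_apply]
  rw [Real.norm_eq_abs, abs_mul]
  nlinarith [sq_nonneg (|f x| - |g x|), sq_abs (f x), sq_abs (g x),
    abs_nonneg (f x), abs_nonneg (g x)]


lemma inv_mulVec_cancel {G : Matrix (Fin K) (Fin K) ℝ} (hG : G.PosDef) (x : Fin K → ℝ) :
    G⁻¹ *ᵥ (G *ᵥ x) = x := by
  rw [mulVec_mulVec, nonsing_inv_mul _ (isUnit_iff_isUnit_det _ |>.1 hG.isUnit), one_mulVec]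

lemma double_sum_smul (c : ℝ) (a : Fin K → ℝ) (G : Matrix (Fin K) (Fin K) ℝ) :
    ∑ k, ∑ k', (c * a k) * G k k' * (c * a k') = c ^ 2 * ∑ k, ∑ k', a k * G k k' * a k' := by
  rw [Finset.mul_sum]
  refine Finset.sum_congr rfl fun k _ => ?_
  rw [Finset.mul_sum]
  exact Finset.sum_congr rfl fun k' _ => by ring


end PseudoReg

namespace PseudoReg

variable {Ω : Type} [MeasurableSpace Ω] {α : Type*} [MeasurableSpace α]

/-- The sub-σ-algebra generated by `V`. -/
@[reducible] def mSub {Ω : Type} {α : Type*} [MeasurableSpace α] (V : Ω → α) :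
    MeasurableSpace Ω :=
  MeasurableSpace.comap V inferInstance

lemma mSub_le {Ω : Type} [MeasurableSpace Ω] {α : Type*} [MeasurableSpace α] {V : Ω → α}
    (hV : Measurable V) : mSub V ≤ (inferInstance : MeasurableSpace Ω) := hV.comap_le

lemma measurable_mSub {Ω : Type} {α : Type*} [MeasurableSpace α] (V : Ω → α) :
    @Measurable Ω α (mSub V) _ V := Measurable.of_comap_le le_rfl

/-- Crux moment bound: `E[Y² φ(V)²] ≤ (s + D²) ∫ φ²` under conditional moment bounds. -/
lemma key_moment_bound (P : Measure Ω) [IsProbabilityMeasure P]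
    (μ : Measure α) [IsProbabilityMeasure μ]
    (V : Ω → α) (hV : Measurable V) (hVlaw : Measure.map V P = μ)
    (Y0 : Ω → ℝ) (hY0 : Measurable Y0) (hYL2 : MemLp Y0 2 P)
    (u : α → ℝ) (humeas : Measurable u)
    (hu : P[Y0 | MeasurableSpace.comap V inferInstance] =ᵐ[P] fun ω => u (V ω))
    (v : α → ℝ) (hvmeas : Measurable v)
    (hcondVar : P[fun ω => (Y0 ω - u (V ω)) ^ 2 | MeasurableSpace.comap V inferInstance]
      =ᵐ[P] fun ω => v (V ω))
    (D : ℝ) (hD0 : 0 ≤ D) (hD : ∀ᵐ z ∂μ, |u z| ≤ D)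
    (s : ℝ) (hs0 : 0 ≤ s) (hv : ∀ᵐ z ∂μ, v z ≤ s)
    (φ : α → ℝ) (hφmeas : Measurable φ) (hφL2 : MemLp φ 2 μ) :
    Integrable (fun ω => Y0 ω ^ 2 * φ (V ω) ^ 2) P ∧
      ∫ ω, Y0 ω ^ 2 * φ (V ω) ^ 2 ∂P ≤ (s + D ^ 2) * ∫ z, φ z ^ 2 ∂μ := by
  have hm := mSub_le hV
  have hVm := measurable_mSub V
  have hMP : MeasurePreserving V P μ := ⟨hV, hVlaw⟩
  -- basic facts
  have haeV : ∀ {p : α → Prop}, (∀ᵐ z ∂μ, p z) → (∀ᵐ ω ∂P, p (V ω)) := by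
    intro p hp
    rw [← hVlaw] at hp
    exact ae_of_ae_map hV.aemeasurable hp
  have huV_bdd : ∀ᵐ ω ∂P, |u (V ω)| ≤ D := haeV hD
  have huVL2 : MemLp (fun ω => u (V ω)) 2 P :=
    MemLp.of_bound ((humeas.comp hV).aestronglyMeasurable) D
      (by simpa [Real.norm_eq_abs] using huV_bdd)
  have hY_sub : MemLp (fun ω => Y0 ω - u (V ω)) 2 P := hYL2.sub huVL2
  have Isq : Integrable (fun ω => (Y0 ω - u (V ω)) ^ 2) P := hY_sub.integrable_sq
  have hvV_int : Integrable (fun ω => v (V ω)) P :=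
    integrable_condExp.congr hcondVar
  have hv_int : Integrable v μ := by
    rw [← hVlaw]
    refine (integrable_map_measure (hvmeas.aestronglyMeasurable) hV.aemeasurable).2 ?_
    exact hvV_int
  have hφ2_int : Integrable (fun z => φ z ^ 2) μ := hφL2.integrable_sq
  -- the truncations
  set g : ℕ → α → ℝ := fun n z => min (φ z ^ 2) n with hg_def
  have hg_meas : ∀ n, Measurable (g n) := fun n => (hφmeas.pow_const 2).min measurable_const
  have hg_nonneg : ∀ n z, 0 ≤ g n z := fun n z => le_min (sq_nonneg _) (Nat.cast_nonneg n)
  have hg_le : ∀ n z, g n z ≤ φ z ^ 2 := fun n z => min_le_left _ _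
  have hg_bd : ∀ n z, ‖g n z‖ ≤ (n : ℝ) := by
    intro n z
    rw [Real.norm_eq_abs, abs_of_nonneg (hg_nonneg n z)]
    exact min_le_right _ _
  have hgVm : ∀ n, StronglyMeasurable[mSub V] fun ω => g n (V ω) :=
    fun n => ((hg_meas n).comp hVm).stronglyMeasurable
  -- step: for each n, the truncated second moment identity and bound
  have key_n : ∀ n : ℕ, Integrable (fun ω => Y0 ω ^ 2 * g n (V ω)) P ∧
      ∫ ω, Y0 ω ^ 2 * g n (V ω) ∂P ≤ (s + D ^ 2) * ∫ z, φ z ^ 2 ∂μ := by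
    intro n
    -- A term
    have IA : Integrable (fun ω => g n (V ω) * (Y0 ω - u (V ω)) ^ 2) P :=
      Isq.bdd_mul (((hgVm n).mono hm).aestronglyMeasurable :
          AEStronglyMeasurable (fun ω => g n (V ω)) P)
        (Eventually.of_forall fun ω => hg_bd n (V ω))
    have hA : ∫ ω, g n (V ω) * (Y0 ω - u (V ω)) ^ 2 ∂P = ∫ ω, g n (V ω) * v (V ω) ∂P := by
      have hpull : P[(fun ω => g n (V ω)) * (fun ω => (Y0 ω - u (V ω)) ^ 2)|mSub V]
          =ᵐ[P] (fun ω => g n (V ω)) * P[fun ω => (Y0 ω - u (V ω)) ^ 2|mSub V] :=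
        condExp_stronglyMeasurable_mul_of_bound hm (hgVm n) Isq n
          (Eventually.of_forall fun ω => hg_bd n (V ω))
      calc ∫ ω, g n (V ω) * (Y0 ω - u (V ω)) ^ 2 ∂P
          = ∫ ω, ((fun ω => g n (V ω)) * (fun ω => (Y0 ω - u (V ω)) ^ 2)) ω ∂P := by
            simp only [Pi.mul_apply]
        _ = ∫ ω, (P[(fun ω => g n (V ω)) * (fun ω => (Y0 ω - u (V ω)) ^ 2)|mSub V]) ω ∂P :=
            (integral_condExp hm).symm
        _ = ∫ ω, g n (V ω) * v (V ω) ∂P := by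
            refine integral_congr_ae (hpull.trans ?_)
            filter_upwards [hcondVar] with ω hω
            simp only [Pi.mul_apply, hω]
    -- B term
    have hcuV : P[fun ω => u (V ω)|mSub V] = fun ω => u (V ω) :=
      condExp_of_stronglyMeasurable hm ((humeas.comp hVm).stronglyMeasurable)
        (huVL2.integrable one_le_two)
    have hcondsub : P[fun ω => Y0 ω - u (V ω)|mSub V] =ᵐ[P] 0 := by
      have h1 := condExp_sub (m := mSub V) (μ := P)
        (hYL2.integrable one_le_two) (huVL2.integrable one_le_two)
      refine h1.trans ?_
      filter_upwards [hu] with ω hω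
      simp only [Pi.sub_apply, Pi.zero_apply, hcuV, hω]
      ring
    have IB : Integrable (fun ω => (2 * u (V ω) * g n (V ω)) * (Y0 ω - u (V ω))) P :=
      (hY_sub.integrable one_le_two).bdd_mul
        ((((humeas.comp hV).const_mul 2).mul ((hg_meas n).comp hV)).aestronglyMeasurable)
        (by
          filter_upwards [huV_bdd] with ω hω
          have := hg_bd n (V ω)
          rw [Real.norm_eq_abs] at this ⊢
          calc |2 * u (V ω) * g n (V ω)| = 2 * |u (V ω)| * |g n (V ω)| := by
                rw [abs_mul, abs_mul, abs_two]
            _ ≤ 2 * D * n := by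
                apply mul_le_mul (by linarith [abs_nonneg (u (V ω))]) this (abs_nonneg _)
                positivity)
    have hB : ∫ ω, (2 * u (V ω) * g n (V ω)) * (Y0 ω - u (V ω)) ∂P = 0 := by
      have hsm : StronglyMeasurable[mSub V] fun ω => 2 * u (V ω) * g n (V ω) :=
        (((humeas.comp hVm).const_mul 2).mul ((hg_meas n).comp hVm)).stronglyMeasurable
      have hpull : P[(fun ω => 2 * u (V ω) * g n (V ω)) * (fun ω => Y0 ω - u (V ω))|mSub V]
          =ᵐ[P] (fun ω => 2 * u (V ω) * g n (V ω)) * P[fun ω => Y0 ω - u (V ω)|mSub V] :=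
        condExp_stronglyMeasurable_mul_of_bound hm hsm (hY_sub.integrable one_le_two)
          (2 * D * n)
          (by
            filter_upwards [huV_bdd] with ω hω
            have := hg_bd n (V ω)
            rw [Real.norm_eq_abs] at this ⊢
            calc |2 * u (V ω) * g n (V ω)| = 2 * |u (V ω)| * |g n (V ω)| := by
                  rw [abs_mul, abs_mul, abs_two]
              _ ≤ 2 * D * n := by
                  apply mul_le_mul (by linarith [abs_nonneg (u (V ω))]) this (abs_nonneg _)
                  positivity)
      calc ∫ ω, (2 * u (V ω) * g n (V ω)) * (Y0 ω - u (V ω)) ∂P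
          = ∫ ω, ((fun ω => 2 * u (V ω) * g n (V ω)) * (fun ω => Y0 ω - u (V ω))) ω ∂P := by
            simp only [Pi.mul_apply]
        _ = ∫ ω, (P[(fun ω => 2 * u (V ω) * g n (V ω)) * (fun ω => Y0 ω - u (V ω))|mSub V]) ω ∂P :=
            (integral_condExp hm).symm
        _ = ∫ ω, (0:ℝ) ∂P := by
            refine integral_congr_ae (hpull.trans ?_)
            filter_upwards [hcondsub] with ω hω
            simp only [Pi.mul_apply, hω, Pi.zero_apply, mul_zero]
        _ = 0 := integral_zero _ _
    -- C term
    have IC : Integrable (fun ω => u (V ω) ^ 2 * g n (V ω)) P := by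
      refine MemLp.integrable le_rfl (MemLp.of_bound ?_ (D ^ 2 * n) ?_)
      · exact (((humeas.comp hV).pow_const 2).mul ((hg_meas n).comp hV)).aestronglyMeasurable
      · filter_upwards [huV_bdd] with ω hω
        have h2 := hg_bd n (V ω)
        rw [Real.norm_eq_abs] at h2 ⊢
        rw [abs_mul, abs_pow]
        apply mul_le_mul (pow_le_pow_left₀ (abs_nonneg _) hω 2) h2 (abs_nonneg _)
        positivity
    -- pointwise decomposition
    have hdecomp : (fun ω => Y0 ω ^ 2 * g n (V ω))
        = fun ω => g n (V ω) * (Y0 ω - u (V ω)) ^ 2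
            + ((2 * u (V ω) * g n (V ω)) * (Y0 ω - u (V ω)) + u (V ω) ^ 2 * g n (V ω)) := by
      funext ω; ring
    have IBC : Integrable (fun ω => (2 * u (V ω) * g n (V ω)) * (Y0 ω - u (V ω))
        + u (V ω) ^ 2 * g n (V ω)) P :=
      (IB.add IC).congr (Eventually.of_forall fun ω => rfl)
    have hint : Integrable (fun ω => Y0 ω ^ 2 * g n (V ω)) P := by
      rw [hdecomp]
      exact (IA.add IBC).congr (Eventually.of_forall fun ω => rfl)
    refine ⟨hint, ?_⟩
    have hsplit : ∫ ω, Y0 ω ^ 2 * g n (V ω) ∂P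
        = ∫ ω, g n (V ω) * v (V ω) ∂P + ∫ ω, u (V ω) ^ 2 * g n (V ω) ∂P := by
      rw [hdecomp, integral_add IA IBC, integral_add IB IC, hA, hB, zero_add]
    -- transfer to μ and bound
    have hCmap : ∫ ω, u (V ω) ^ 2 * g n (V ω) ∂P = ∫ z, u z ^ 2 * g n z ∂μ := by
      rw [← hVlaw, integral_map (f := fun z => u z ^ 2 * g n z) hV.aemeasurable
        (((humeas.pow_const 2).mul (hg_meas n)).aestronglyMeasurable)]
    have hAmap : ∫ ω, g n (V ω) * v (V ω) ∂P = ∫ z, g n z * v z ∂μ := by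
      rw [← hVlaw, integral_map (f := fun z => g n z * v z) hV.aemeasurable
        (((hg_meas n).mul hvmeas).aestronglyMeasurable)]
    rw [hsplit, hCmap, hAmap, ← integral_add]
    · rw [← integral_const_mul]
      refine integral_mono_ae ?_ (hφ2_int.const_mul _) ?_
      · refine Integrable.add ?_ ?_
        · exact hv_int.bdd_mul ((hg_meas n).aestronglyMeasurable)
            (Eventually.of_forall (hg_bd n))
        · refine MemLp.integrable le_rfl (MemLp.of_bound ?_ (D ^ 2 * n) ?_)
          · exact ((humeas.pow_const 2).mul (hg_meas n)).aestronglyMeasurable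
          · filter_upwards [hD] with z hz
            have h2 := hg_bd n z
            rw [Real.norm_eq_abs] at h2 ⊢
            rw [abs_mul, abs_pow]
            apply mul_le_mul (pow_le_pow_left₀ (abs_nonneg _) hz 2) h2 (abs_nonneg _)
            positivity
      · filter_upwards [hD, hv] with z hz1 hz2
        have h1 : g n z * v z ≤ s * φ z ^ 2 := by
          calc g n z * v z ≤ g n z * s := by
                exact mul_le_mul_of_nonneg_left hz2 (hg_nonneg n z)
            _ ≤ φ z ^ 2 * s := mul_le_mul_of_nonneg_right (hg_le n z) hs0
            _ = s * φ z ^ 2 := mul_comm _ _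
        have h2 : u z ^ 2 * g n z ≤ D ^ 2 * φ z ^ 2 := by
          have hu2 : u z ^ 2 ≤ D ^ 2 := by
            rw [← sq_abs]
            exact pow_le_pow_left₀ (abs_nonneg _) hz1 2
          calc u z ^ 2 * g n z ≤ D ^ 2 * g n z :=
                mul_le_mul_of_nonneg_right hu2 (hg_nonneg n z)
            _ ≤ D ^ 2 * φ z ^ 2 := mul_le_mul_of_nonneg_left (hg_le n z) (by positivity)
        calc g n z * v z + u z ^ 2 * g n z ≤ s * φ z ^ 2 + D ^ 2 * φ z ^ 2 := add_le_add h1 h2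
          _ = (s + D ^ 2) * φ z ^ 2 := by ring
    · exact hv_int.bdd_mul ((hg_meas n).aestronglyMeasurable)
        (Eventually.of_forall (hg_bd n))
    · refine MemLp.integrable le_rfl (MemLp.of_bound ?_ (D ^ 2 * n) ?_)
      · exact ((humeas.pow_const 2).mul (hg_meas n)).aestronglyMeasurable
      · filter_upwards [hD] with z hz
        have h2 := hg_bd n z
        rw [Real.norm_eq_abs] at h2 ⊢
        rw [abs_mul, abs_pow]
        apply mul_le_mul (pow_le_pow_left₀ (abs_nonneg _) hz 2) h2 (abs_nonneg _)
        positivity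
  -- monotone convergence
  have hmono : ∀ ω, Monotone fun n : ℕ => ENNReal.ofReal (Y0 ω ^ 2 * g n (V ω)) := by
    intro ω a b hab
    apply ENNReal.ofReal_le_ofReal
    exact mul_le_mul_of_nonneg_left (min_le_min le_rfl (Nat.cast_le.2 hab)) (sq_nonneg _)
  have hsup : ∀ ω, (⨆ n : ℕ, ENNReal.ofReal (Y0 ω ^ 2 * g n (V ω)))
      = ENNReal.ofReal (Y0 ω ^ 2 * φ (V ω) ^ 2) := by
    intro ω
    have hev : ∀ᶠ n : ℕ in atTop,
        ENNReal.ofReal (Y0 ω ^ 2 * g n (V ω)) = ENNReal.ofReal (Y0 ω ^ 2 * φ (V ω) ^ 2) := by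
      filter_upwards [eventually_ge_atTop ⌈φ (V ω) ^ 2⌉₊] with n hn
      have : g n (V ω) = φ (V ω) ^ 2 :=
        min_eq_left ((Nat.le_ceil _).trans (Nat.cast_le.2 hn))
      rw [this]
    have htend : Filter.Tendsto (fun n : ℕ => ENNReal.ofReal (Y0 ω ^ 2 * g n (V ω))) atTop
        (nhds (ENNReal.ofReal (Y0 ω ^ 2 * φ (V ω) ^ 2))) :=
      Tendsto.congr' (by filter_upwards [hev] with n hn; rw [hn]) tendsto_const_nhds
    exact tendsto_nhds_unique (tendsto_atTop_iSup (hmono ω)) htend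
  have hmeasYg : ∀ n : ℕ, Measurable fun ω => Y0 ω ^ 2 * g n (V ω) :=
    fun n => (hY0.pow_const 2).mul ((hg_meas n).comp hV)
  have hgn_nonneg : ∀ n : ℕ, 0 ≤ᵐ[P] fun ω => Y0 ω ^ 2 * g n (V ω) :=
    fun n => Eventually.of_forall fun ω => mul_nonneg (sq_nonneg _) (hg_nonneg n (V ω))
  have hlim : ∫⁻ ω, ENNReal.ofReal (Y0 ω ^ 2 * φ (V ω) ^ 2) ∂P
      ≤ ENNReal.ofReal ((s + D ^ 2) * ∫ z, φ z ^ 2 ∂μ) := by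
    have heq : ∫⁻ ω, ENNReal.ofReal (Y0 ω ^ 2 * φ (V ω) ^ 2) ∂P
        = ⨆ n : ℕ, ∫⁻ ω, ENNReal.ofReal (Y0 ω ^ 2 * g n (V ω)) ∂P := by
      rw [← lintegral_iSup (fun n => (hmeasYg n).ennreal_ofReal)
        (fun a b hab => fun ω => hmono ω hab)]
      exact lintegral_congr fun ω => (hsup ω).symm
    rw [heq]
    refine iSup_le fun n => ?_
    rw [← ofReal_integral_eq_lintegral_ofReal (key_n n).1 (hgn_nonneg n)]
    exact ENNReal.ofReal_le_ofReal (key_n n).2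
  have haem : AEStronglyMeasurable (fun ω => Y0 ω ^ 2 * φ (V ω) ^ 2) P :=
    ((hY0.pow_const 2).mul ((hφmeas.comp hV).pow_const 2)).aestronglyMeasurable
  have hfin : Integrable (fun ω => Y0 ω ^ 2 * φ (V ω) ^ 2) P := by
    refine ⟨haem, ?_⟩
    rw [hasFiniteIntegral_iff_norm]
    have : ∫⁻ ω, ENNReal.ofReal ‖Y0 ω ^ 2 * φ (V ω) ^ 2‖ ∂P
        = ∫⁻ ω, ENNReal.ofReal (Y0 ω ^ 2 * φ (V ω) ^ 2) ∂P := by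
      refine lintegral_congr fun ω => ?_
      rw [Real.norm_eq_abs, abs_of_nonneg (by positivity)]
    rw [this]
    exact lt_of_le_of_lt hlim ENNReal.ofReal_lt_top
  refine ⟨hfin, ?_⟩
  have h0 : 0 ≤ᵐ[P] fun ω => Y0 ω ^ 2 * φ (V ω) ^ 2 :=
    Eventually.of_forall fun ω => by positivity
  rw [integral_eq_lintegral_of_nonneg_ae h0 haem]
  have hBnn : 0 ≤ (s + D ^ 2) * ∫ z, φ z ^ 2 ∂μ :=
    mul_nonneg (by positivity) (integral_nonneg fun z => sq_nonneg _)
  calc (∫⁻ ω, ENNReal.ofReal (Y0 ω ^ 2 * φ (V ω) ^ 2) ∂P).toReal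
      ≤ (ENNReal.ofReal ((s + D ^ 2) * ∫ z, φ z ^ 2 ∂μ)).toReal :=
        ENNReal.toReal_mono ENNReal.ofReal_ne_top hlim
    _ = (s + D ^ 2) * ∫ z, φ z ^ 2 ∂μ := ENNReal.toReal_ofReal hBnn


end PseudoReg

open MeasureTheory ProbabilityTheory

/-- **Variance term of the pseudo regression estimator.**
In the pseudo regression setup, with `u^K = ∑ₖ γₖ ψₖ` the `L²(μ)`-orthogonal projection of `u`
onto `span{ψ₁,…,ψ_K}`, and with `λ` (resp. `Λ`) a positive lower (resp. upper) bound for the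
eigenvalues of the Gram matrix `𝒢` (Rayleigh-quotient bounds), one has
`E ∫_𝒟 |ū − u^K|² dμ ≤ (σ² + D²) tr(𝒢) / (M λ_min) ≤ (σ² + D²) K λ_max / (M λ_min)`. -/
theorem pseudo_regression_variance_term
    {d K M : ℕ} (hM : 0 < M)
    {Ω : Type} [MeasurableSpace Ω] (P : Measure Ω) [IsProbabilityMeasure P]
    (𝒟 : Set (Fin d → ℝ)) (h𝒟 : MeasurableSet 𝒟)
    (μ : Measure (Fin d → ℝ)) [IsProbabilityMeasure μ] (hμ𝒟 : μ 𝒟ᶜ = 0)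
    (ψ : Fin K → (Fin d → ℝ) → ℝ) (hψmeas : ∀ k, Measurable (ψ k))
    (hψL2 : ∀ k, MemLp (ψ k) 2 μ)
    (U : Fin M → Ω → (Fin d → ℝ)) (Y : Fin M → Ω → ℝ)
    (hUmeas : ∀ m, Measurable (U m)) (hYmeas : ∀ m, Measurable (Y m))
    (hindep : iIndepFun (fun m ω => (U m ω, Y m ω)) P)
    (hident : ∀ m, Measure.map (fun ω => (U m ω, Y m ω)) P
      = Measure.map (fun ω => (U ⟨0, hM⟩ ω, Y ⟨0, hM⟩ ω)) P)
    (hlaw : Measure.map (U ⟨0, hM⟩) P = μ)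
    (hYL2 : MemLp (Y ⟨0, hM⟩) 2 P)
    (u : (Fin d → ℝ) → ℝ) (humeas : Measurable u)
    (hu : P[Y ⟨0, hM⟩ | MeasurableSpace.comap (U ⟨0, hM⟩) inferInstance]
      =ᵐ[P] fun ω => u (U ⟨0, hM⟩ ω))
    (D : ℝ) (hD : ∀ z ∈ 𝒟, |u z| ≤ D)
    (σ : ℝ) (v : (Fin d → ℝ) → ℝ) (hvmeas : Measurable v)
    (hv : ∀ z ∈ 𝒟, v z ≤ σ ^ 2)
    (hcondVar : P[fun ω => (Y ⟨0, hM⟩ ω - u (U ⟨0, hM⟩ ω)) ^ 2 |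
        MeasurableSpace.comap (U ⟨0, hM⟩) inferInstance]
      =ᵐ[P] fun ω => v (U ⟨0, hM⟩ ω))
    (G : Matrix (Fin K) (Fin K) ℝ)
    (hG : ∀ k l, G k l = ∫ z, ψ k z * ψ l z ∂μ)
    (lam Lam : ℝ) (hlam : 0 < lam)
    (heig : ∀ x : Fin K → ℝ,
      lam * ∑ k, x k ^ 2 ≤ ∑ k, ∑ l, x k * G k l * x l ∧
      ∑ k, ∑ l, x k * G k l * x l ≤ Lam * ∑ k, x k ^ 2)
    -- `u^K = ∑ₖ γₖ ψₖ` is the `L²(μ)`-orthogonal projection of `u` onto `span{ψ₁,…,ψ_K}`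
    (γ : Fin K → ℝ)
    (hproj : ∀ k, ∫ z, ((∑ l, γ l * ψ l z) - u z) * ψ k z ∂μ = 0) :
    (∫ ω, ∫ z in 𝒟,
        ((∑ k, ((M : ℝ)⁻¹ * ∑ l, G⁻¹ k l * ∑ m, ψ l (U m ω) * Y m ω) * ψ k z)
          - ∑ k, γ k * ψ k z) ^ 2 ∂μ ∂P)
      ≤ (σ ^ 2 + D ^ 2) * G.trace / (M * lam) ∧
    (σ ^ 2 + D ^ 2) * G.trace / (M * lam) ≤ (σ ^ 2 + D ^ 2) * K * Lam / (M * lam) := by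
  classical
  have hMlam : 0 < (M : ℝ) * lam := mul_pos (by exact_mod_cast hM) hlam
  have hσD : (0:ℝ) ≤ σ ^ 2 + D ^ 2 := by positivity
  have htrace_le : G.trace ≤ (K : ℝ) * Lam := by
    rw [PseudoReg.trace_eq_sum_diag]
    calc ∑ k, G k k ≤ ∑ _k : Fin K, Lam :=
          Finset.sum_le_sum fun k _ => (PseudoReg.diag_bounds heig k).2
      _ = (K : ℝ) * Lam := by simp [Finset.sum_const, nsmul_eq_mul]
  have hsecond : (σ ^ 2 + D ^ 2) * G.trace / (M * lam)
      ≤ (σ ^ 2 + D ^ 2) * K * Lam / (M * lam) := by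
    have h : (σ ^ 2 + D ^ 2) * G.trace ≤ (σ ^ 2 + D ^ 2) * K * Lam := by
      calc (σ ^ 2 + D ^ 2) * G.trace ≤ (σ ^ 2 + D ^ 2) * ((K : ℝ) * Lam) :=
            mul_le_mul_of_nonneg_left htrace_le hσD
        _ = (σ ^ 2 + D ^ 2) * K * Lam := by ring
    exact (div_le_div_iff_of_pos_right hMlam).2 h
  refine ⟨?_, hsecond⟩
  set m0 : Fin M := ⟨0, hM⟩ with hm0_def
  have hGsymm : ∀ k l, G k l = G l k := by
    intro k l
    rw [hG k l, hG l k]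
    exact integral_congr_ae (Eventually.of_forall fun z => mul_comm _ _)
  have hGpd : G.PosDef := PseudoReg.posdef_of_rayleigh hlam hGsymm fun x => (heig x).1
  have hDae : ∀ᵐ z ∂μ, z ∈ 𝒟 := by
    rw [ae_iff]
    exact hμ𝒟
  have hDmu : ∀ᵐ z ∂μ, |u z| ≤ D := hDae.mono fun z hz => hD z hz
  have hvmu : ∀ᵐ z ∂μ, v z ≤ σ ^ 2 := hDae.mono fun z hz => hv z hz
  have hD0 : 0 ≤ D := by
    obtain ⟨z, hz⟩ := hDmu.exists
    exact (abs_nonneg _).trans hz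
  have hpair_meas : ∀ m : Fin M, Measurable fun ω => (U m ω, Y m ω) :=
    fun m => (hUmeas m).prodMk (hYmeas m)
  have hUlaw : ∀ m : Fin M, Measure.map (U m) P = μ := by
    intro m
    have h1 : Measure.map (U m) P
        = Measure.map Prod.fst (Measure.map (fun ω => (U m ω, Y m ω)) P) := by
      rw [Measure.map_map measurable_fst (hpair_meas m)]
      rfl
    rw [h1, hident m, Measure.map_map measurable_fst (hpair_meas m0)]
    exact hlaw
  have hψU2 : ∀ (m : Fin M) (l : Fin K), MemLp (fun ω => ψ l (U m ω)) 2 P :=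
    fun m l => (hψL2 l).comp_measurePreserving ⟨hUmeas m, hUlaw m⟩
  have hYlaw : ∀ m : Fin M, Measure.map (Y m) P = Measure.map (Y m0) P := by
    intro m
    have h1 : ∀ m' : Fin M, Measure.map (Y m') P
        = Measure.map Prod.snd (Measure.map (fun ω => (U m' ω, Y m' ω)) P) := by
      intro m'
      rw [Measure.map_map measurable_snd (hpair_meas m')]
      rfl
    rw [h1 m, hident m, ← h1 m0]
  have hYm2 : ∀ m : Fin M, MemLp (Y m) 2 P := by
    intro m
    have h0 : MemLp id 2 (Measure.map (Y m0) P) :=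
      (memLp_map_measure_iff aestronglyMeasurable_id (hYmeas m0).aemeasurable).2 hYL2
    rw [← hYlaw m] at h0
    exact (memLp_map_measure_iff aestronglyMeasurable_id (hYmeas m).aemeasurable).1 h0
  have hlawint : ∀ (m : Fin M) (h : (Fin d → ℝ) × ℝ → ℝ), Measurable h →
      ∫ ω, h (U m ω, Y m ω) ∂P = ∫ ω, h (U m0 ω, Y m0 ω) ∂P := by
    intro m h hh
    rw [← integral_map (hpair_meas m).aemeasurable hh.aestronglyMeasurable,
      ← integral_map (hpair_meas m0).aemeasurable hh.aestronglyMeasurable, hident m]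
  have hlawintg : ∀ (m : Fin M) (h : (Fin d → ℝ) × ℝ → ℝ), Measurable h →
      Integrable (fun ω => h (U m0 ω, Y m0 ω)) P →
      Integrable (fun ω => h (U m ω, Y m ω)) P := by
    intro m h hh hint
    have h1 : Integrable h (Measure.map (fun ω => (U m0 ω, Y m0 ω)) P) :=
      (integrable_map_measure hh.aestronglyMeasurable (hpair_meas m0).aemeasurable).2 hint
    rw [← hident m] at h1
    exact (integrable_map_measure hh.aestronglyMeasurable (hpair_meas m).aemeasurable).1 h1
  have Ipsi : ∀ k l, Integrable (fun z => ψ k z * ψ l z) μ :=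
    fun k l => PseudoReg.integrable_mul_of_memℒp_two (hψL2 k) (hψL2 l)
  have hGll : ∀ l, ∫ z, ψ l z ^ 2 ∂μ = G l l := by
    intro l
    rw [hG l l]
    exact integral_congr_ae (Eventually.of_forall fun z => pow_two (ψ l z))
  have hkey : ∀ l, Integrable (fun ω => Y m0 ω ^ 2 * ψ l (U m0 ω) ^ 2) P ∧
      ∫ ω, Y m0 ω ^ 2 * ψ l (U m0 ω) ^ 2 ∂P ≤ (σ ^ 2 + D ^ 2) * G l l := by
    intro l
    have h := PseudoReg.key_moment_bound P μ (U m0) (hUmeas m0) hlaw (Y m0) (hYmeas m0) hYL2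
      u humeas hu v hvmeas hcondVar D hD0 hDmu (σ ^ 2) (sq_nonneg σ) hvmu (ψ l) (hψmeas l)
      (hψL2 l)
    rwa [hGll l] at h
  -- L² facts for ψ_l(U_m) Y_m
  have hψY2 : ∀ (m : Fin M) (l : Fin K), MemLp (fun ω => ψ l (U m ω) * Y m ω) 2 P := by
    intro m l
    have hsqint : Integrable (fun ω => (ψ l (U m ω) * Y m ω) ^ 2) P := by
      refine hlawintg m (fun p => (ψ l p.1 * p.2) ^ 2)
        (((( hψmeas l).comp measurable_fst).mul measurable_snd).pow_const 2) ?_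
      exact ((hkey l).1).congr (Eventually.of_forall fun ω => by ring)
    refine (memLp_two_iff_integrable_sq ?_).2 hsqint
    exact (((hψmeas l).comp (hUmeas m)).mul (hYmeas m)).aestronglyMeasurable
  -- the mean vector c
  set c : Fin K → ℝ := fun l => ∫ ω, ψ l (U m0 ω) * Y m0 ω ∂P with hc_def
  have hc_all : ∀ (m : Fin M) (l : Fin K), ∫ ω, ψ l (U m ω) * Y m ω ∂P = c l :=
    fun m l => hlawint m (fun p => ψ l p.1 * p.2)
      (((hψmeas l).comp measurable_fst).mul measurable_snd)
  have hcγ : ∀ l, c l = ∑ j, G l j * γ j := by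
    intro l
    have hm := PseudoReg.mSub_le (hUmeas m0)
    -- step 1 : c l = E[ψ_l(U) u(U)]
    have hpull : P[(fun ω => ψ l (U m0 ω)) * Y m0 | PseudoReg.mSub (U m0)]
        =ᵐ[P] (fun ω => ψ l (U m0 ω)) * P[Y m0 | PseudoReg.mSub (U m0)] :=
      condExp_mul_of_stronglyMeasurable_left
        (((hψmeas l).comp (PseudoReg.measurable_mSub (U m0))).stronglyMeasurable)
        ((PseudoReg.integrable_mul_of_memℒp_two (hψU2 m0 l) (hYm2 m0)).congr
          (Eventually.of_forall fun ω => rfl))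
        (hYL2.integrable one_le_two)
    have step1 : c l = ∫ ω, ψ l (U m0 ω) * u (U m0 ω) ∂P := by
      calc c l = ∫ ω, ((fun ω => ψ l (U m0 ω)) * Y m0) ω ∂P := by
            simp only [Pi.mul_apply, hc_def]
        _ = ∫ ω, (P[(fun ω => ψ l (U m0 ω)) * Y m0 | PseudoReg.mSub (U m0)]) ω ∂P :=
            (integral_condExp hm).symm
        _ = ∫ ω, ψ l (U m0 ω) * u (U m0 ω) ∂P := by
            refine integral_congr_ae (hpull.trans ?_)
            filter_upwards [hu] with ω hω
            simp only [Pi.mul_apply, hω]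
    have step2 : ∫ ω, ψ l (U m0 ω) * u (U m0 ω) ∂P = ∫ z, ψ l z * u z ∂μ := by
      rw [← hlaw, integral_map (f := fun z => ψ l z * u z) (hUmeas m0).aemeasurable
        (((hψmeas l).mul humeas).aestronglyMeasurable)]
    -- step 3 : ∫ ψ_l u = ∑_j γ_j ∫ ψ_j ψ_l
    have IntA : Integrable (fun z => (∑ j, γ j * ψ j z) * ψ l z) μ := by
      have : Integrable (fun z => ∑ j, γ j * (ψ j z * ψ l z)) μ :=
        integrable_finset_sum _ fun j _ => (Ipsi j l).const_mul (γ j)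
      exact this.congr (Eventually.of_forall fun z => by simp only [Finset.sum_mul, mul_assoc])
    have IntB : Integrable (fun z => u z * ψ l z) μ := by
      refine ((hψL2 l).integrable one_le_two).bdd_mul (c := D) humeas.aestronglyMeasurable ?_
      filter_upwards [hDmu] with z hz
      rwa [Real.norm_eq_abs]
    have hproj' := hproj l
    have hsub : ∫ z, ((∑ j, γ j * ψ j z) - u z) * ψ l z ∂μ
        = (∫ z, (∑ j, γ j * ψ j z) * ψ l z ∂μ) - ∫ z, u z * ψ l z ∂μ := by
      rw [← integral_sub IntA IntB]
      exact integral_congr_ae (Eventually.of_forall fun z => by ring)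
    have hexp : ∫ z, (∑ j, γ j * ψ j z) * ψ l z ∂μ = ∑ j, γ j * G j l := by
      have h1 : ∫ z, (∑ j, γ j * ψ j z) * ψ l z ∂μ
          = ∫ z, ∑ j, γ j * (ψ j z * ψ l z) ∂μ :=
        integral_congr_ae (Eventually.of_forall fun z => by simp only [Finset.sum_mul, mul_assoc])
      rw [h1, integral_finset_sum _ fun j _ => (Ipsi j l).const_mul (γ j)]
      exact Finset.sum_congr rfl fun j _ => by rw [integral_const_mul, hG j l]
    have step3 : ∫ z, ψ l z * u z ∂μ = ∑ j, γ j * G j l := by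
      have h2 : ∫ z, ψ l z * u z ∂μ = ∫ z, u z * ψ l z ∂μ :=
        integral_congr_ae (Eventually.of_forall fun z => mul_comm _ _)
      rw [h2]
      have := hsub.symm.trans hproj'
      have h3 : ∫ z, u z * ψ l z ∂μ = ∫ z, (∑ j, γ j * ψ j z) * ψ l z ∂μ := by linarith
      rw [h3, hexp]
    rw [step1, step2, step3]
    exact Finset.sum_congr rfl fun j _ => by rw [hGsymm l j]; ring
  -- centered variables
  set X : Fin K → Fin M → Ω → ℝ := fun l m ω => ψ l (U m ω) * Y m ω - c l with hX_def
  have hX2 : ∀ (l : Fin K) (m : Fin M), MemLp (X l m) 2 P :=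
    fun l m => (hψY2 m l).sub (memLp_const (c l))
  have hXint : ∀ (l : Fin K) (m : Fin M), Integrable (X l m) P :=
    fun l m => (hX2 l m).integrable one_le_two
  have hXmean : ∀ (l : Fin K) (m : Fin M), ∫ ω, X l m ω ∂P = 0 := by
    intro l m
    have h1 : ∫ ω, X l m ω ∂P = (∫ ω, ψ l (U m ω) * Y m ω ∂P) - ∫ _ω, c l ∂P :=
      integral_sub ((hψY2 m l).integrable one_le_two) (integrable_const _)
    rw [h1, hc_all m l, integral_const]
    simp
  have hXX_int : ∀ (l l' : Fin K) (m m' : Fin M),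
      Integrable (fun ω => X l m ω * X l' m' ω) P :=
    fun l l' m m' => PseudoReg.integrable_mul_of_memℒp_two (hX2 l m) (hX2 l' m')
  have hcross : ∀ (l l' : Fin K) (m m' : Fin M), m ≠ m' →
      ∫ ω, X l m ω * X l' m' ω ∂P = 0 := by
    intro l l' m m' hmm
    have hIF : IndepFun (fun ω => (U m ω, Y m ω)) (fun ω => (U m' ω, Y m' ω)) P :=
      hindep.indepFun hmm
    have hcomp : IndepFun (X l m) (X l' m') P := by
      have h := hIF.comp
        ((((hψmeas l).comp measurable_fst).mul measurable_snd).sub measurable_const :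
          Measurable fun p : (Fin d → ℝ) × ℝ => ψ l p.1 * p.2 - c l)
        ((((hψmeas l').comp measurable_fst).mul measurable_snd).sub measurable_const :
          Measurable fun p : (Fin d → ℝ) × ℝ => ψ l' p.1 * p.2 - c l')
      exact h
    calc ∫ ω, X l m ω * X l' m' ω ∂P = ∫ ω, (X l m * X l' m') ω ∂P := by
          simp only [Pi.mul_apply]
      _ = (∫ ω, X l m ω ∂P) * ∫ ω, X l' m' ω ∂P :=
          hcomp.integral_mul_eq_mul_integral (hXint l m).aestronglyMeasurable
            (hXint l' m').aestronglyMeasurable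
      _ = 0 := by rw [hXmean, hXmean, mul_zero]
  -- second moments
  set s2 : Fin K → Fin K → ℝ :=
    fun l l' => ∫ ω, Y m0 ω ^ 2 * (ψ l (U m0 ω) * ψ l' (U m0 ω)) ∂P with hs2_def
  have hsame : ∀ (l l' : Fin K) (m : Fin M),
      ∫ ω, X l m ω * X l' m ω ∂P = s2 l l' - c l * c l' := by
    intro l l' m
    have hmm : Measurable fun p : (Fin d → ℝ) × ℝ =>
        (ψ l p.1 * p.2 - c l) * (ψ l' p.1 * p.2 - c l') :=
      ((((hψmeas l).comp measurable_fst).mul measurable_snd).sub measurable_const).mul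
        ((((hψmeas l').comp measurable_fst).mul measurable_snd).sub measurable_const)
    have h1 : ∫ ω, X l m ω * X l' m ω ∂P
        = ∫ ω, (fun p : (Fin d → ℝ) × ℝ => (ψ l p.1 * p.2 - c l) * (ψ l' p.1 * p.2 - c l'))
            (U m ω, Y m ω) ∂P := rfl
    rw [h1, hlawint m _ hmm]
    have hIa : Integrable (fun ω => (ψ l (U m0 ω) * Y m0 ω) * (ψ l' (U m0 ω) * Y m0 ω)) P :=
      PseudoReg.integrable_mul_of_memℒp_two (hψY2 m0 l) (hψY2 m0 l')
    have hI2 : Integrable (fun ω => c l' * (ψ l (U m0 ω) * Y m0 ω)) P :=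
      ((hψY2 m0 l).integrable one_le_two).const_mul _
    have hI3 : Integrable (fun ω => c l * (ψ l' (U m0 ω) * Y m0 ω)) P :=
      ((hψY2 m0 l').integrable one_le_two).const_mul _
    have e1 : ∫ ω, (fun p : (Fin d → ℝ) × ℝ =>
          (ψ l p.1 * p.2 - c l) * (ψ l' p.1 * p.2 - c l')) (U m0 ω, Y m0 ω) ∂P
        = ∫ ω, (((ψ l (U m0 ω) * Y m0 ω) * (ψ l' (U m0 ω) * Y m0 ω)
            - c l' * (ψ l (U m0 ω) * Y m0 ω)) - c l * (ψ l' (U m0 ω) * Y m0 ω))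
            + c l * c l' ∂P :=
      integral_congr_ae (Eventually.of_forall fun ω => by simp only []; ring)
    have hI12 : Integrable (fun ω => (ψ l (U m0 ω) * Y m0 ω) * (ψ l' (U m0 ω) * Y m0 ω)
        - c l' * (ψ l (U m0 ω) * Y m0 ω)) P :=
      (hIa.sub hI2).congr (Eventually.of_forall fun ω => rfl)
    have hI123 : Integrable (fun ω => ((ψ l (U m0 ω) * Y m0 ω) * (ψ l' (U m0 ω) * Y m0 ω)
        - c l' * (ψ l (U m0 ω) * Y m0 ω)) - c l * (ψ l' (U m0 ω) * Y m0 ω)) P :=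
      (hI12.sub hI3).congr (Eventually.of_forall fun ω => rfl)
    rw [e1, integral_add hI123 (integrable_const _),
      integral_sub hI12 hI3, integral_sub hIa hI2, integral_const]
    have e2 : ∫ ω, (ψ l (U m0 ω) * Y m0 ω) * (ψ l' (U m0 ω) * Y m0 ω) ∂P = s2 l l' :=
      integral_congr_ae (Eventually.of_forall fun ω => by ring)
    rw [e2, integral_const_mul, integral_const_mul, hc_all m0 l, hc_all m0 l']
    simp only [probReal_univ, smul_eq_mul, one_mul]
    ring
  -- the sums S and their second moments
  set S : Fin K → Ω → ℝ := fun l ω => ∑ m, X l m ω with hS_def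
  have hSprod_int : ∀ l l' : Fin K, Integrable (fun ω => S l ω * S l' ω) P := by
    intro l l'
    have h : Integrable (fun ω => ∑ m, ∑ m', X l m ω * X l' m' ω) P :=
      integrable_finset_sum _ fun m _ => integrable_finset_sum _ fun m' _ => hXX_int l l' m m'
    exact h.congr (Eventually.of_forall fun ω => by
      simp only [hS_def]
      rw [Finset.sum_mul_sum])
  have hSS : ∀ l l' : Fin K, ∫ ω, S l ω * S l' ω ∂P = M * (s2 l l' - c l * c l') := by
    intro l l'
    have h1 : ∫ ω, S l ω * S l' ω ∂P = ∑ m, ∑ m', ∫ ω, X l m ω * X l' m' ω ∂P := by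
      calc ∫ ω, S l ω * S l' ω ∂P = ∫ ω, ∑ m, ∑ m', X l m ω * X l' m' ω ∂P :=
            integral_congr_ae (Eventually.of_forall fun ω => by
              simp only [hS_def]
              rw [Finset.sum_mul_sum])
        _ = ∑ m, ∑ m', ∫ ω, X l m ω * X l' m' ω ∂P := by
            rw [integral_finset_sum _
              (fun m _ => integrable_finset_sum _ fun m' _ => hXX_int l l' m m')]
            exact Finset.sum_congr rfl fun m _ =>
              integral_finset_sum _ fun m' _ => hXX_int l l' m m'
    rw [h1]
    have h2 : ∀ m : Fin M, ∑ m', ∫ ω, X l m ω * X l' m' ω ∂P = s2 l l' - c l * c l' := by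
      intro m
      rw [Finset.sum_eq_single m (fun m' _ hne => hcross l l' m m' (Ne.symm hne))
        (fun h => absurd (Finset.mem_univ m) h)]
      exact hsame l l' m
    rw [Finset.sum_congr rfl fun m _ => h2 m]
    simp [Finset.sum_const, nsmul_eq_mul, mul_sub]
  -- quadratic form expansion of the inner integral
  have hrestrict : μ.restrict 𝒟 = μ := Measure.restrict_eq_self_of_ae_mem hDae
  have hquad : ∀ x : Fin K → ℝ,
      ∫ z, (∑ k, x k * ψ k z) ^ 2 ∂μ = ∑ k, ∑ k', x k * G k k' * x k' := by
    intro x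
    have h1 : ∫ z, (∑ k, x k * ψ k z) ^ 2 ∂μ
        = ∫ z, ∑ k, ∑ k', (x k * x k') * (ψ k z * ψ k' z) ∂μ := by
      refine integral_congr_ae (Eventually.of_forall fun z => ?_)
      simp only []
      rw [pow_two, Finset.sum_mul_sum]
      exact Finset.sum_congr rfl fun k _ => Finset.sum_congr rfl fun k' _ => by ring
    rw [h1, integral_finset_sum _ (fun k _ => integrable_finset_sum _
      (fun k' _ => (Ipsi k k').const_mul _))]
    refine Finset.sum_congr rfl fun k _ => ?_
    rw [integral_finset_sum _ (fun k' _ => (Ipsi k k').const_mul _)]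
    refine Finset.sum_congr rfl fun k' _ => ?_
    rw [integral_const_mul, hG k k']
    ring
  -- identification of the centered coefficients
  have hβγ : ∀ (ω : Ω) (k : Fin K),
      ((M : ℝ)⁻¹ * ∑ l, G⁻¹ k l * ∑ m, ψ l (U m ω) * Y m ω) - γ k
        = (M : ℝ)⁻¹ * ∑ l, G⁻¹ k l * S l ω := by
    intro ω k
    have h1 : ∀ l, (∑ m, ψ l (U m ω) * Y m ω) = S l ω + (M : ℝ) * c l := by
      intro l
      simp only [hS_def, hX_def]
      rw [Finset.sum_sub_distrib]
      simp [Finset.sum_const, nsmul_eq_mul]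
    have h2 : ∑ l, G⁻¹ k l * c l = γ k := by
      have h3 : ∀ l, c l = (G *ᵥ γ) l := fun l => hcγ l
      have h4 := congrFun (PseudoReg.inv_mulVec_cancel hGpd γ) k
      calc ∑ l, G⁻¹ k l * c l = ∑ l, G⁻¹ k l * (G *ᵥ γ) l :=
            Finset.sum_congr rfl fun l _ => by rw [h3 l]
        _ = γ k := h4
    have h5 : (∑ l, G⁻¹ k l * ∑ m, ψ l (U m ω) * Y m ω)
        = ∑ l, (G⁻¹ k l * S l ω + (M : ℝ) * (G⁻¹ k l * c l)) :=
      Finset.sum_congr rfl fun l _ => by rw [h1 l]; ring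
    have hMne : (M : ℝ) ≠ 0 := (Nat.cast_pos.2 hM).ne'
    rw [h5, Finset.sum_add_distrib, ← Finset.mul_sum, h2, mul_add,
      inv_mul_cancel_left₀ hMne, add_sub_cancel_right]
  -- the inner integral as a quadratic form in S
  have hinner : ∀ ω : Ω,
      (∫ z in 𝒟, ((∑ k, ((M : ℝ)⁻¹ * ∑ l, G⁻¹ k l * ∑ m, ψ l (U m ω) * Y m ω) * ψ k z)
          - ∑ k, γ k * ψ k z) ^ 2 ∂μ)
        = ((M : ℝ)⁻¹) ^ 2 * ∑ j, ∑ j', S j ω * G⁻¹ j j' * S j' ω := by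
    intro ω
    rw [hrestrict]
    have e1 : (fun z => ((∑ k, ((M : ℝ)⁻¹ * ∑ l, G⁻¹ k l * ∑ m, ψ l (U m ω) * Y m ω) * ψ k z)
        - ∑ k, γ k * ψ k z) ^ 2)
        = fun z => (∑ k, ((M : ℝ)⁻¹ * ∑ l, G⁻¹ k l * S l ω) * ψ k z) ^ 2 := by
      funext z
      congr 1
      rw [← Finset.sum_sub_distrib]
      exact Finset.sum_congr rfl fun k _ => by rw [← sub_mul, hβγ ω k]
    rw [e1, hquad, PseudoReg.double_sum_smul]
    congr 1
    exact PseudoReg.inv_conj_quad hGpd (fun l => S l ω)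
  -- final bound on the expectation
  have hSSint : ∀ j j' : Fin K, Integrable (fun ω => S j ω * G⁻¹ j j' * S j' ω) P :=
    fun j j' => ((hSprod_int j j').const_mul (G⁻¹ j j')).congr
      (Eventually.of_forall fun ω => by ring)
  have h6 : ∫ ω, ∑ j, ∑ j', S j ω * G⁻¹ j j' * S j' ω ∂P
      = ∑ j, ∑ j', G⁻¹ j j' * ((M : ℝ) * (s2 j j' - c j * c j')) := by
    rw [integral_finset_sum _ (fun j _ => integrable_finset_sum _ fun j' _ => hSSint j j')]
    refine Finset.sum_congr rfl fun j _ => ?_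
    rw [integral_finset_sum _ (fun j' _ => hSSint j j')]
    refine Finset.sum_congr rfl fun j' _ => ?_
    have e : ∫ ω, S j ω * G⁻¹ j j' * S j' ω ∂P = G⁻¹ j j' * ∫ ω, S j ω * S j' ω ∂P := by
      rw [← integral_const_mul]
      exact integral_congr_ae (Eventually.of_forall fun ω => by ring)
    rw [e, hSS j j']
  have hA2 : 0 ≤ ∑ j, ∑ j', G⁻¹ j j' * (c j * c j') := by
    have h := PseudoReg.inv_quad_nonneg hGpd c
    calc (0:ℝ) ≤ ∑ j, ∑ j', c j * G⁻¹ j j' * c j' := h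
      _ = ∑ j, ∑ j', G⁻¹ j j' * (c j * c j') :=
        Finset.sum_congr rfl fun j _ => Finset.sum_congr rfl fun j' _ => by ring
  have hterm : ∀ j j' : Fin K, Integrable
      (fun ω => G⁻¹ j j' * (Y m0 ω ^ 2 * (ψ j (U m0 ω) * ψ j' (U m0 ω)))) P := by
    intro j j'
    refine Integrable.const_mul ?_ _
    exact (PseudoReg.integrable_mul_of_memℒp_two (hψY2 m0 j) (hψY2 m0 j')).congr
      (Eventually.of_forall fun ω => by ring)
  have hA1 : ∑ j, ∑ j', G⁻¹ j j' * s2 j j' ≤ lam⁻¹ * ((σ ^ 2 + D ^ 2) * G.trace) := by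
    have h7 : ∑ j, ∑ j', G⁻¹ j j' * s2 j j'
        = ∫ ω, ∑ j, ∑ j', G⁻¹ j j' * (Y m0 ω ^ 2 * (ψ j (U m0 ω) * ψ j' (U m0 ω))) ∂P := by
      rw [integral_finset_sum _ (fun j _ => integrable_finset_sum _ fun j' _ => hterm j j')]
      refine Finset.sum_congr rfl fun j _ => ?_
      rw [integral_finset_sum _ (fun j' _ => hterm j j')]
      exact Finset.sum_congr rfl fun j' _ => (integral_const_mul _ _).symm
    rw [h7]
    have hrhs_int : Integrable (fun ω => lam⁻¹ * ∑ j, Y m0 ω ^ 2 * ψ j (U m0 ω) ^ 2) P :=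
      (integrable_finset_sum _ fun j _ => (hkey j).1).const_mul _
    have hmono : ∀ ω, ∑ j, ∑ j', G⁻¹ j j' * (Y m0 ω ^ 2 * (ψ j (U m0 ω) * ψ j' (U m0 ω)))
        ≤ lam⁻¹ * ∑ j, Y m0 ω ^ 2 * ψ j (U m0 ω) ^ 2 := by
      intro ω
      have hq := PseudoReg.inv_quadform_le hlam hGpd (fun x => (heig x).1)
        (fun j => ψ j (U m0 ω))
      have e3 : ∑ j, ∑ j', G⁻¹ j j' * (Y m0 ω ^ 2 * (ψ j (U m0 ω) * ψ j' (U m0 ω)))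
          = Y m0 ω ^ 2 * ∑ j, ∑ j', ψ j (U m0 ω) * G⁻¹ j j' * ψ j' (U m0 ω) := by
        rw [Finset.mul_sum]
        refine Finset.sum_congr rfl fun j _ => ?_
        rw [Finset.mul_sum]
        exact Finset.sum_congr rfl fun j' _ => by ring
      have e4 : lam⁻¹ * ∑ j, Y m0 ω ^ 2 * ψ j (U m0 ω) ^ 2
          = Y m0 ω ^ 2 * (lam⁻¹ * ∑ j, ψ j (U m0 ω) ^ 2) := by
        rw [← Finset.mul_sum]
        ring
      rw [e3, e4]
      exact mul_le_mul_of_nonneg_left hq (sq_nonneg _)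
    refine le_trans (integral_mono (integrable_finset_sum _ fun j _ =>
      integrable_finset_sum _ fun j' _ => hterm j j') hrhs_int hmono) ?_
    rw [integral_const_mul, integral_finset_sum _ (fun j _ => (hkey j).1)]
    have h8 : ∑ j, ∫ ω, Y m0 ω ^ 2 * ψ j (U m0 ω) ^ 2 ∂P ≤ (σ ^ 2 + D ^ 2) * G.trace := by
      rw [PseudoReg.trace_eq_sum_diag, Finset.mul_sum]
      exact Finset.sum_le_sum fun j _ => (hkey j).2
    exact mul_le_mul_of_nonneg_left h8 (inv_nonneg.2 hlam.le)
  have e5 : ∑ j, ∑ j', G⁻¹ j j' * ((M : ℝ) * (s2 j j' - c j * c j'))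
      = (M : ℝ) * (∑ j, ∑ j', G⁻¹ j j' * s2 j j'
          - ∑ j, ∑ j', G⁻¹ j j' * (c j * c j')) := by
    symm
    rw [mul_sub, Finset.mul_sum, Finset.mul_sum, ← Finset.sum_sub_distrib]
    refine Finset.sum_congr rfl fun j _ => ?_
    rw [Finset.mul_sum, Finset.mul_sum, ← Finset.sum_sub_distrib]
    exact Finset.sum_congr rfl fun j' _ => by ring
  have hfinal : ∫ ω, ((M : ℝ)⁻¹) ^ 2 * ∑ j, ∑ j', S j ω * G⁻¹ j j' * S j' ω ∂P
      ≤ (σ ^ 2 + D ^ 2) * G.trace / ((M : ℝ) * lam) := by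
    have hMne : (M : ℝ) ≠ 0 := (Nat.cast_pos.2 hM).ne'
    calc ∫ ω, ((M : ℝ)⁻¹) ^ 2 * ∑ j, ∑ j', S j ω * G⁻¹ j j' * S j' ω ∂P
        = ((M : ℝ)⁻¹) ^ 2 * ∫ ω, ∑ j, ∑ j', S j ω * G⁻¹ j j' * S j' ω ∂P :=
          integral_const_mul _ _
      _ = ((M : ℝ)⁻¹) ^ 2 * ((M : ℝ) * (∑ j, ∑ j', G⁻¹ j j' * s2 j j'
            - ∑ j, ∑ j', G⁻¹ j j' * (c j * c j'))) := by rw [h6, e5]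
      _ ≤ ((M : ℝ)⁻¹) ^ 2 * ((M : ℝ) * (lam⁻¹ * ((σ ^ 2 + D ^ 2) * G.trace))) := by
          refine mul_le_mul_of_nonneg_left ?_ (by positivity)
          refine mul_le_mul_of_nonneg_left ?_ (by positivity)
          linarith [hA1, hA2]
      _ = (σ ^ 2 + D ^ 2) * G.trace / ((M : ℝ) * lam) := by
          field_simp
  exact le_trans (le_of_eq (integral_congr_ae (Eventually.of_forall hinner))) hfinal
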